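/- Let k be a field equipped with an additive valuation v : k → ℝ ∪ {+∞} (v(x) = +∞ iff x = 0, v(xy) = v(x) + v(y), v(x+y) ≥ min(v(x), v(y))), and let Γ = k[z,z⁻¹] with val_p and val_P defined by val_p(Σ c_i z^i) = min_{i}(v(c_i) + i·p) and val_P = inf_{p∈P} val_p. Let P₀, P₁ ⊆ ℝ be nonempty compact sets and set s = inf P₀ − sup P₁. For a k-linear map ψ : Γ → Γ define C(ψ) = M_{z⁻¹} ∘ ψ ∘ M_z, i.e. C(ψ)(F) = z⁻¹·ψ(z·F). If m ∈ ℝ satisfies val_{P₁}(ψ(F)) ≥ val_{P₀}(F) + m for all F ∈ Γ, then for every natural number n and every F ∈ Γ, val_{P₁}(Cⁿ(ψ)(F)) ≥ val_{P₀}(F) + m + n·s. In particular, if sup P₁ < inf P₀ (for instance if P₁ and P₀ are disjoint with P₁ in the negative and P₀ in the positive half-line) then s > 0 and the operator valuation of Cⁿ(ψ) tends to +∞ with n. -/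

import Mathlib

open LaurentPolynomial

/-- The valuation `val_p(F) = min_{i ∈ supp F} (v(c_i) + i·p)` of a Laurent polynomial
`F = Σᵢ cᵢ zⁱ ∈ k[z,z⁻¹]` at `p ∈ ℝ` (with `val_p(0) = +∞`). -/
noncomputable def valPt1 {k : Type*} [Field k] (v : k → EReal) (p : ℝ)
    (F : LaurentPolynomial k) : EReal :=
  F.coeff.support.inf fun i => v (F.coeff i) + (((i : ℝ) * p : ℝ) : EReal)

/-- The valuation `val_P(F) = inf_{p ∈ P} val_p(F)` associated to a subset `P ⊆ ℝ`. -/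
noncomputable def valSet1 {k : Type*} [Field k] (v : k → EReal) (P : Set ℝ)
    (F : LaurentPolynomial k) : EReal :=
  ⨅ p ∈ P, valPt1 v p F

/-- The conjugation operator `C(ψ) = M_{z⁻¹} ∘ ψ ∘ M_z`, i.e. `C(ψ)(F) = z⁻¹·ψ(z·F)`. -/
noncomputable def conjOp (k : Type*) [Field k]
    (ψ : LaurentPolynomial k →ₗ[k] LaurentPolynomial k) :
    LaurentPolynomial k →ₗ[k] LaurentPolynomial k :=
  (LinearMap.mulLeft k (T (-1))) ∘ₗ ψ ∘ₗ (LinearMap.mulLeft k (T 1))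

lemma T_mul_coeff {k : Type*} [Field k] (a : ℤ) (F : LaurentPolynomial k) (i : ℤ) :
    (T a * F : LaurentPolynomial k).coeff i = F.coeff (i - a) := by
  have : (T a : LaurentPolynomial k) = AddMonoidAlgebra.single a 1 := rfl
  rw [this, AddMonoidAlgebra.coeff_single_mul_apply, one_mul, neg_add_eq_sub]

lemma valPt1_T_mul {k : Type*} [Field k] (v : k → EReal) (p : ℝ) (a : ℤ)
    (F : LaurentPolynomial k) :
    valPt1 v p F + (((a : ℝ) * p : ℝ) : EReal) ≤ valPt1 v p (T a * F) := by
  unfold valPt1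
  apply Finset.le_inf
  intro i hi
  have hc : (T a * F : LaurentPolynomial k).coeff i = F.coeff (i - a) := T_mul_coeff a F i
  have hmem : i - a ∈ F.coeff.support := by
    rw [Finsupp.mem_support_iff] at hi ⊢
    rwa [hc] at hi
  have h1 : F.coeff.support.inf (fun i => v (F.coeff i) + (((i : ℝ) * p : ℝ) : EReal))
      ≤ v (F.coeff (i - a)) + ((((i - a : ℤ) : ℝ) * p : ℝ) : EReal) :=
    Finset.inf_le hmem
  calc F.coeff.support.inf (fun i => v (F.coeff i) + (((i : ℝ) * p : ℝ) : EReal)) + ((a : ℝ) * p : ℝ)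
      ≤ (v (F.coeff (i - a)) + ((((i - a : ℤ) : ℝ) * p : ℝ) : EReal)) + ((a : ℝ) * p : ℝ) := by
        exact add_le_add_left h1 _
    _ = v ((T a * F : LaurentPolynomial k).coeff i) + (((i : ℝ) * p : ℝ) : EReal) := by
        rw [hc, add_assoc, ← EReal.coe_add]
        congr 1
        norm_cast
        push_cast
        ring

lemma valSet1_T_one_mul {k : Type*} [Field k] (v : k → EReal) (P : Set ℝ)
    (hbdd : BddBelow P) (F : LaurentPolynomial k) :
    valSet1 v P F + ((sInf P : ℝ) : EReal) ≤ valSet1 v P (T 1 * F) := by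
  unfold valSet1
  apply le_iInf₂
  intro p hp
  have h1 : valPt1 v p F + ((sInf P : ℝ) : EReal) ≤ valPt1 v p F + ((p : ℝ) : EReal) :=
    add_le_add_right (EReal.coe_le_coe_iff.2 (csInf_le hbdd hp)) _
  have h2 := valPt1_T_mul v p 1 F
  simp only [Int.cast_one, one_mul] at h2
  exact le_trans (add_le_add_left (iInf₂_le p hp) _) (le_trans h1 h2)

lemma valSet1_T_negone_mul {k : Type*} [Field k] (v : k → EReal) (P : Set ℝ)
    (hbdd : BddAbove P) (G : LaurentPolynomial k) :
    valSet1 v P G + ((-sSup P : ℝ) : EReal) ≤ valSet1 v P (T (-1) * G) := by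
  unfold valSet1
  apply le_iInf₂
  intro p hp
  have h1 : valPt1 v p G + ((-sSup P : ℝ) : EReal) ≤ valPt1 v p G + ((-p : ℝ) : EReal) :=
    add_le_add_right (EReal.coe_le_coe_iff.2 (by linarith [le_csSup hbdd hp])) _
  have h2 := valPt1_T_mul v p (-1) G
  simp only [Int.cast_neg, Int.cast_one, neg_one_mul, neg_mul, one_mul] at h2
  exact le_trans (add_le_add_left (iInf₂_le p hp) _) (le_trans h1 h2)

/-- Valuation gain under conjugation: let `P₀, P₁ ⊆ ℝ` be nonempty compact sets and
`s = inf P₀ − sup P₁`.  If `ψ : Γ → Γ` is `k`-linear with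
`val_{P₁}(ψ(F)) ≥ val_{P₀}(F) + m` for all `F`, then for every `n` and every `F`,
`val_{P₁}(Cⁿ(ψ)(F)) ≥ val_{P₀}(F) + m + n·s`.  In particular, if `sup P₁ < inf P₀` then
`s > 0` and the operator valuation of `Cⁿ(ψ)` tends to `+∞` with `n`. -/
theorem conjugation_valuation_gain {k : Type*} [Field k] (v : k → EReal)
    (hv_top : ∀ x : k, v x = ⊤ ↔ x = 0) (hv_bot : ∀ x : k, v x ≠ ⊥)
    (hv_mul : ∀ x y : k, v (x * y) = v x + v y)
    (hv_add : ∀ x y : k, min (v x) (v y) ≤ v (x + y))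
    (P₀ P₁ : Set ℝ) (hP₀c : IsCompact P₀) (hP₁c : IsCompact P₁)
    (hP₀ne : P₀.Nonempty) (hP₁ne : P₁.Nonempty)
    (m : ℝ) (ψ : LaurentPolynomial k →ₗ[k] LaurentPolynomial k)
    (hψ : ∀ F : LaurentPolynomial k,
      valSet1 v P₀ F + (m : EReal) ≤ valSet1 v P₁ (ψ F)) :
    (∀ (n : ℕ) (F : LaurentPolynomial k),
      valSet1 v P₀ F + ((m + n * (sInf P₀ - sSup P₁) : ℝ) : EReal) ≤
        valSet1 v P₁ ((conjOp k)^[n] ψ F)) ∧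
    (sSup P₁ < sInf P₀ → 0 < sInf P₀ - sSup P₁) ∧
    (sSup P₁ < sInf P₀ → ∀ M : ℝ, ∃ N : ℕ, ∀ n ≥ N, ∀ F : LaurentPolynomial k,
      valSet1 v P₀ F + (M : EReal) ≤ valSet1 v P₁ ((conjOp k)^[n] ψ F)) := by
  have hbdd₀ : BddBelow P₀ := hP₀c.bddBelow
  have hbdd₁ : BddAbove P₁ := hP₁c.bddAbove
  set s : ℝ := sInf P₀ - sSup P₁ with hs
  -- single conjugation step
  have step : ∀ (m' : ℝ) (φ : LaurentPolynomial k →ₗ[k] LaurentPolynomial k),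
      (∀ F, valSet1 v P₀ F + (m' : EReal) ≤ valSet1 v P₁ (φ F)) →
      ∀ F, valSet1 v P₀ F + ((m' + s : ℝ) : EReal) ≤ valSet1 v P₁ (conjOp k φ F) := by
    intro m' φ hφ F
    have hconj : conjOp k φ F = T (-1) * φ (T 1 * F) := rfl
    rw [hconj]
    have h1 := valSet1_T_one_mul v P₀ hbdd₀ F
    have h2 := hφ (T 1 * F)
    have h3 := valSet1_T_negone_mul v P₁ hbdd₁ (φ (T 1 * F))
    calc valSet1 v P₀ F + ((m' + s : ℝ) : EReal)
        = ((valSet1 v P₀ F + ((sInf P₀ : ℝ) : EReal)) + ((m' : ℝ) : EReal))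
            + ((-sSup P₁ : ℝ) : EReal) := by
          rw [show (m' + s : ℝ) = sInf P₀ + m' + (-sSup P₁) by rw [hs]; ring,
            EReal.coe_add, EReal.coe_add, ← add_assoc, ← add_assoc]
      _ ≤ ((valSet1 v P₀ (T 1 * F)) + ((m' : ℝ) : EReal)) + ((-sSup P₁ : ℝ) : EReal) :=
          add_le_add_left (add_le_add_left h1 _) _
      _ ≤ (valSet1 v P₁ (φ (T 1 * F))) + ((-sSup P₁ : ℝ) : EReal) := add_le_add_left h2 _
      _ ≤ valSet1 v P₁ (T (-1) * φ (T 1 * F)) := h3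
  -- iterated statement, generalized over m'
  have main : ∀ (n : ℕ) (m' : ℝ) (φ : LaurentPolynomial k →ₗ[k] LaurentPolynomial k),
      (∀ F, valSet1 v P₀ F + (m' : EReal) ≤ valSet1 v P₁ (φ F)) →
      ∀ F, valSet1 v P₀ F + ((m' + n * s : ℝ) : EReal) ≤
        valSet1 v P₁ ((conjOp k)^[n] φ F) := by
    intro n
    induction n with
    | zero => intro m' φ hφ F; simpa using hφ F
    | succ n ih =>
      intro m' φ hφ F
      rw [Function.iterate_succ_apply]
      have := ih (m' + s) (conjOp k φ) (step m' φ hφ) F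
      convert this using 3
      push_cast
      ring
  refine ⟨fun n F => main n m ψ hψ F, fun h => by linarith, fun h M => ?_⟩
  have hs0 : 0 < s := by rw [hs]; linarith
  obtain ⟨N, hN⟩ := exists_nat_ge ((M - m) / s)
  refine ⟨N, fun n hn F => ?_⟩
  have hMn : M ≤ m + n * s := by
    have h1 : (M - m) / s ≤ (n : ℝ) := le_trans hN (Nat.cast_le.2 hn)
    have := (div_le_iff₀ hs0).1 h1
    linarith
  calc valSet1 v P₀ F + (M : EReal) ≤ valSet1 v P₀ F + ((m + n * s : ℝ) : EReal) :=
        add_le_add_right (EReal.coe_le_coe_iff.2 hMn) _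
    _ ≤ valSet1 v P₁ ((conjOp k)^[n] ψ F) := main n m ψ hψ F
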